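/- arXiv:2401.17426 — 2 statements merged into one kernel-verified Lean document; each statement's English description precedes it below -/
import Mathlib

section
/- Let d ≥ 1, let A be a d×d real matrix, b ∈ ℝ^d, and v ∈ ℝ. Let x_q ~ N(0, I_d) and θ ~ N(0, I_d/d) be independent random vectors in ℝ^d. Then E[(v·θᵀ(A + θbᵀ)x_q − θᵀx_q)²] = (1/d)·tr((vA − I_d)(vA − I_d)ᵀ) + v²·‖b‖²·(d+2)/d. In particular, this quantity (the leading, D-independent term of the single-head in-context-learning loss) vanishes exactly when vA = I_d and b = 0. -/
open MeasureTheory ProbabilityTheory Matrix Real Set intervalIntegral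
open scoped NNReal ENNReal

noncomputable section

/-- The standard Gaussian measure `N(0, I_d)` on `ℝ^d` (i.i.d. standard normal coordinates). -/
def stdG (d : ℕ) : Measure (Fin d → ℝ) :=
  Measure.pi fun _ => gaussianReal 0 1

/-- The Gaussian measure `N(0, I_d / d)` on `ℝ^d` (i.i.d. centered normal coordinates with
variance `1/d`). -/
def thetaG (d : ℕ) : Measure (Fin d → ℝ) :=
  Measure.pi fun _ => gaussianReal 0 (d : NNReal)⁻¹

/-- Euclidean dot product on `ℝ^d`. -/
def dot {d : ℕ} (a b : Fin d → ℝ) : ℝ := ∑ j, a j * b j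

namespace ICLaux

open MeasureTheory ProbabilityTheory Matrix Real Set intervalIntegral





variable {d : ℕ}

lemma integral_pi_prod (μ : Measure ℝ) [IsProbabilityMeasure μ] (F : Fin d → ℝ → ℝ) :
    ∫ θ : Fin d → ℝ, ∏ a, F a (θ a) ∂Measure.pi (fun _ => μ) = ∏ a, ∫ t, F a t ∂μ := by
  letI : MeasureSpace ℝ := ⟨μ⟩
  haveI : SigmaFinite (volume : Measure ℝ) := inferInstance
  exact MeasureTheory.integral_fintype_prod_eq_prod F

lemma integrable_pi_prod (μ : Measure ℝ) [IsProbabilityMeasure μ] (F : Fin d → ℝ → ℝ)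
    (h : ∀ a, Integrable (F a) μ) :
    Integrable (fun θ : Fin d → ℝ => ∏ a, F a (θ a)) (Measure.pi (fun _ => μ)) := by
  letI : MeasureSpace ℝ := ⟨μ⟩
  haveI : SigmaFinite (volume : Measure ℝ) := inferInstance
  exact MeasureTheory.Integrable.fintype_prod h

lemma prod_eq_two (θ : Fin d → ℝ) (i k : Fin d) (f g : ℝ → ℝ) :
    (∏ a, ((if a = i then f (θ a) else 1) * (if a = k then g (θ a) else 1)))
      = f (θ i) * g (θ k) := by
  rw [Finset.prod_mul_distrib, Finset.prod_ite_eq' Finset.univ i (fun a => f (θ a)),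
    Finset.prod_ite_eq' Finset.univ k (fun a => g (θ a))]
  simp

lemma integral_pi_two (μ : Measure ℝ) [IsProbabilityMeasure μ] (i k : Fin d) (f g : ℝ → ℝ)
    (hf : Integrable f μ) (hg : Integrable g μ) (hfg : Integrable (fun t => f t * g t) μ) :
    ∫ θ : Fin d → ℝ, f (θ i) * g (θ k) ∂Measure.pi (fun _ => μ) =
      if i = k then ∫ t, f t * g t ∂μ else (∫ t, f t ∂μ) * ∫ t, g t ∂μ := by
  simp_rw [← prod_eq_two _ i k f g]
  rw [integral_pi_prod μ (fun a t => (if a = i then f t else 1) * (if a = k then g t else 1))]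
  rcases eq_or_ne i k with h | h
  · subst h
    rw [if_pos rfl, Finset.prod_eq_single i]
    · simp
    · intro a _ ha
      simp [ha]
    · simp
  · rw [if_neg h]
    have key : ∀ a : Fin d, (∫ t, (if a = i then f t else 1) * (if a = k then g t else 1) ∂μ)
        = (if a = i then ∫ t, f t ∂μ else 1) * (if a = k then ∫ t, g t ∂μ else 1) := by
      intro a
      split_ifs with h1 h2
      · exact absurd (h1 ▸ h2) h
      · simp
      · simp
      · simp
    simp_rw [key]
    rw [Finset.prod_mul_distrib, Finset.prod_ite_eq' Finset.univ i (fun _ => ∫ t, f t ∂μ),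
      Finset.prod_ite_eq' Finset.univ k (fun _ => ∫ t, g t ∂μ)]
    simp

lemma integrable_pi_two (μ : Measure ℝ) [IsProbabilityMeasure μ] (i k : Fin d) (f g : ℝ → ℝ)
    (hf : Integrable f μ) (hg : Integrable g μ) (hfg : Integrable (fun t => f t * g t) μ) :
    Integrable (fun θ : Fin d → ℝ => f (θ i) * g (θ k)) (Measure.pi (fun _ => μ)) := by
  simp_rw [← prod_eq_two _ i k f g]
  refine integrable_pi_prod μ
    (fun a t => (if a = i then f t else 1) * (if a = k then g t else 1)) (fun a => ?_)
  rcases eq_or_ne a i with rfl | h1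
  · rcases eq_or_ne a k with rfl | h2
    · simpa using hfg
    · simpa [h2] using hf
  · rcases eq_or_ne a k with rfl | h2
    · simpa [h1] using hg
    · simpa [h1, h2] using (integrable_const (E := ℝ) (μ := μ) 1)





lemma integ_pow_exp {bb : ℝ} (hb : 0 < bb) (n : ℕ) :
    Integrable (fun x : ℝ => x ^ n * rexp (-bb * x ^ 2)) := by
  have h := integrable_rpow_mul_exp_neg_mul_sq hb
    (s := (n : ℝ)) ((neg_lt_zero.mpr one_pos).trans_le (Nat.cast_nonneg n))
  simp_rw [rpow_natCast] at h
  exact h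

lemma integral_gaussianReal_eq {v : ℝ≥0} (hv : v ≠ 0) (g : ℝ → ℝ) :
    ∫ x, g x ∂gaussianReal 0 v = ∫ x, gaussianPDFReal 0 v x * g x := by
  rw [gaussianReal_of_var_ne_zero 0 hv]
  have h : gaussianPDF 0 v = fun x => ((gaussianPDFReal 0 v x).toNNReal : ℝ≥0∞) := rfl
  rw [h, integral_withDensity_eq_integral_smul
    ((measurable_gaussianPDFReal 0 v).real_toNNReal) g]
  congr 1 with x
  rw [NNReal.smul_def, smul_eq_mul, Real.coe_toNNReal _ (gaussianPDFReal_nonneg 0 v x)]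

lemma integrable_gaussianReal_iff {v : ℝ≥0} (hv : v ≠ 0) (g : ℝ → ℝ) :
    Integrable g (gaussianReal 0 v) ↔
      Integrable (fun x => gaussianPDFReal 0 v x * g x) := by
  rw [gaussianReal_of_var_ne_zero 0 hv,
    show gaussianPDF 0 v = fun x => ((gaussianPDFReal 0 v x).toNNReal : ℝ≥0∞) from rfl,
    integrable_withDensity_iff_integrable_smul ((measurable_gaussianPDFReal 0 v).real_toNNReal)]
  have h : (fun x => ((gaussianPDFReal 0 v x).toNNReal : ℝ≥0) • g x)
      = fun x => gaussianPDFReal 0 v x * g x := by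
    funext x
    rw [NNReal.smul_def, smul_eq_mul, Real.coe_toNNReal _ (gaussianPDFReal_nonneg 0 v x)]
  rw [h]

lemma pdf_mul {v : ℝ≥0} (x y : ℝ) :
    gaussianPDFReal 0 v x * y
      = (√(2 * π * v))⁻¹ * (y * rexp (-(2 * (v : ℝ))⁻¹ * x ^ 2)) := by
  rw [gaussianPDFReal]
  have h : -(x - 0) ^ 2 / (2 * (v : ℝ)) = -(2 * (v : ℝ))⁻¹ * x ^ 2 := by
    rw [sub_zero]; ring
  rw [h]; ring

lemma gaussian_moment_odd (v : ℝ≥0) (n : ℕ) (hn : Odd n) :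
    ∫ x, x ^ n ∂gaussianReal 0 v = 0 := by
  have hmap : (gaussianReal 0 v).map (fun x : ℝ => -x) = gaussianReal 0 v := by
    have hfun : (fun x : ℝ => -x) = (((-1 : ℝ)) * ·) := funext fun x => by ring
    rw [hfun, gaussianReal_map_const_mul (-1 : ℝ)]
    have h1 : NNReal.mk ((-1 : ℝ) ^ 2) (sq_nonneg _) = 1 := by ext; norm_num
    rw [h1]
    norm_num
  have h1 : ∫ x, x ^ n ∂gaussianReal 0 v = ∫ x, (-x) ^ n ∂gaussianReal 0 v := by
    conv_lhs => rw [← hmap]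
    rw [integral_map measurable_neg.aemeasurable
      (Measurable.aestronglyMeasurable (by fun_prop))]
  simp_rw [hn.neg_pow] at h1
  rw [MeasureTheory.integral_neg] at h1
  linarith

lemma integral_pow_mul_exp_even {bb : ℝ} (hb : 0 < bb) (k : ℕ) :
    ∫ x : ℝ, x ^ (2 * k) * rexp (-bb * x ^ 2)
      = bb ^ (-(2 * (k : ℝ) + 1) / 2) * Real.Gamma ((2 * (k : ℝ) + 1) / 2) := by
  have hint := integ_pow_exp hb (2 * k)
  have hIic : ∫ x in Iic (0:ℝ), x ^ (2*k) * rexp (-bb * x ^ 2)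
      = ∫ x in Ioi (0:ℝ), x ^ (2*k) * rexp (-bb * x ^ 2) := by
    have h := integral_comp_neg_Ioi (c := (0:ℝ))
      (f := fun x => x ^ (2*k) * rexp (-bb * x ^ 2))
    simp only [neg_zero] at h
    rw [← h]
    refine setIntegral_congr_fun measurableSet_Ioi (fun x _ => ?_)
    rw [(even_two_mul k).neg_pow, neg_sq]
  have hsplit : ∫ x : ℝ, x ^ (2*k) * rexp (-bb * x ^ 2)
      = 2 * ∫ x in Ioi (0:ℝ), x ^ (2*k) * rexp (-bb * x ^ 2) := by
    rw [← integral_Iic_add_Ioi (b := (0:ℝ)) hint.integrableOn hint.integrableOn, hIic]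
    ring
  have hIoi : ∫ x in Ioi (0:ℝ), x ^ (2*k) * rexp (-bb * x ^ 2)
      = ∫ x in Ioi (0:ℝ), x ^ ((2*k : ℕ) : ℝ) * rexp (-bb * x ^ (2:ℝ)) := by
    refine setIntegral_congr_fun measurableSet_Ioi (fun x _ => ?_)
    rw [rpow_natCast, rpow_two]
  rw [hsplit, hIoi, integral_rpow_mul_exp_neg_mul_rpow two_pos
    ((neg_lt_zero.mpr one_pos).trans_le (Nat.cast_nonneg _)) hb]
  push_cast
  ring

lemma Gamma_three_halves : Real.Gamma (3/2) = √π / 2 := by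
  rw [show (3/2 : ℝ) = 1/2 + 1 by norm_num, Real.Gamma_add_one (by norm_num),
    Real.Gamma_one_half_eq]
  ring

lemma Gamma_five_halves : Real.Gamma (5/2) = 3 * √π / 4 := by
  rw [show (5/2 : ℝ) = 3/2 + 1 by norm_num, Real.Gamma_add_one (by norm_num),
    Gamma_three_halves]
  ring


lemma sqrt_two_pi_v (v : ℝ≥0) : √(2 * π * v) = √(2 * (v:ℝ)) * √π := by
  rw [show 2 * π * (v:ℝ) = (2*(v:ℝ)) * π by ring, sqrt_mul (by positivity)]

lemma gaussian_integrable_pow {v : ℝ≥0} (hv : v ≠ 0) (n : ℕ) :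
    Integrable (fun x : ℝ => x ^ n) (gaussianReal 0 v) := by
  have hvpos : (0:ℝ) < v := by exact_mod_cast pos_iff_ne_zero.mpr hv
  have hb : (0:ℝ) < (2 * (v:ℝ))⁻¹ := by positivity
  rw [integrable_gaussianReal_iff hv]
  simp_rw [pdf_mul]
  exact (integ_pow_exp hb n).const_mul _

lemma gaussian_moment_two {v : ℝ≥0} (hv : v ≠ 0) :
    ∫ x, x ^ 2 ∂gaussianReal 0 v = v := by
  have hvpos : (0:ℝ) < v := by exact_mod_cast pos_iff_ne_zero.mpr hv
  have h2v : (0:ℝ) < 2 * (v:ℝ) := by linarith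
  have hb : (0:ℝ) < (2 * (v:ℝ))⁻¹ := by positivity
  rw [integral_gaussianReal_eq hv]
  simp_rw [pdf_mul]
  rw [MeasureTheory.integral_const_mul]
  have hk := integral_pow_mul_exp_even hb 1
  simp only [show (2*1 : ℕ) = 2 from rfl, Nat.cast_one] at hk
  rw [show (2 * (1:ℝ) + 1) = 3 by norm_num] at hk
  rw [hk, Gamma_three_halves, sqrt_two_pi_v]
  have e1 : ((2*(v:ℝ))⁻¹) ^ (-(3:ℝ)/2) = (2*(v:ℝ)) * √(2*(v:ℝ)) := by
    rw [Real.inv_rpow h2v.le, ← Real.rpow_neg h2v.le, neg_div, neg_neg,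
      show (3:ℝ)/2 = 1 + 1/2 by norm_num, Real.rpow_add h2v, Real.rpow_one,
      ← Real.sqrt_eq_rpow]
  rw [e1]
  have hs : √(2*(v:ℝ)) ≠ 0 := by positivity
  have hp : √π ≠ 0 := by positivity
  field_simp

lemma gaussian_moment_four {v : ℝ≥0} (hv : v ≠ 0) :
    ∫ x, x ^ 4 ∂gaussianReal 0 v = 3 * (v:ℝ) ^ 2 := by
  have hvpos : (0:ℝ) < v := by exact_mod_cast pos_iff_ne_zero.mpr hv
  have h2v : (0:ℝ) < 2 * (v:ℝ) := by linarith
  have hb : (0:ℝ) < (2 * (v:ℝ))⁻¹ := by positivity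
  rw [integral_gaussianReal_eq hv]
  simp_rw [pdf_mul]
  rw [MeasureTheory.integral_const_mul]
  have hk := integral_pow_mul_exp_even hb 2
  simp only [show (2*2 : ℕ) = 4 from rfl, Nat.cast_ofNat] at hk
  rw [show (2 * (2:ℝ) + 1) = 5 by norm_num] at hk
  rw [hk, Gamma_five_halves, sqrt_two_pi_v]
  have e1 : ((2*(v:ℝ))⁻¹) ^ (-(5:ℝ)/2) = (2*(v:ℝ))^2 * √(2*(v:ℝ)) := by
    rw [Real.inv_rpow h2v.le, ← Real.rpow_neg h2v.le, neg_div, neg_neg,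
      show (5:ℝ)/2 = 2 + 1/2 by norm_num, Real.rpow_add h2v, rpow_two,
      ← Real.sqrt_eq_rpow]
  rw [e1]
  have hs : √(2*(v:ℝ)) ≠ 0 := by positivity
  have hp : √π ≠ 0 := by positivity
  field_simp
  ring



/-! ### The structure functions of the loss -/

def Cm {d : ℕ} (A : Matrix (Fin d) (Fin d) ℝ) (v : ℝ) (i j : Fin d) : ℝ :=
  v * A i j - (if i = j then 1 else 0)

def cf {d : ℕ} (A : Matrix (Fin d) (Fin d) ℝ) (b : Fin d → ℝ) (v : ℝ) (j : Fin d)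
    (θ : Fin d → ℝ) : ℝ :=
  ∑ i, (Cm A v i j * θ i + v * b j * θ i ^ 2)

lemma pow_mul_pow (a c : ℕ) : (fun t : ℝ => t ^ a * t ^ c) = fun t => t ^ (a + c) :=
  funext fun t => (pow_add t a c).symm

lemma base {d : ℕ} (A : Matrix (Fin d) (Fin d) ℝ) (b : Fin d → ℝ) (v : ℝ) (x θ : Fin d → ℝ) :
    v * dot θ ((A + vecMulVec θ b).mulVec x) - dot θ x = ∑ j, cf A b v j θ * x j := by
  simp only [dot, cf, Cm, Matrix.mulVec, dotProduct, Matrix.add_apply,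
    Matrix.vecMulVec_apply]
  rw [Finset.mul_sum, ← Finset.sum_sub_distrib]
  have hrhs : ∀ i : Fin d,
      ∑ j, ((v * A i j - (if i = j then 1 else 0)) * θ i + v * b j * θ i ^ 2) * x j
        = v * (θ i * ∑ j, (A i j + θ i * b j) * x j) - θ i * x i := by
    intro i
    calc ∑ j, ((v * A i j - (if i = j then 1 else 0)) * θ i + v * b j * θ i ^ 2) * x j
        = ∑ j, (v * (θ i * ((A i j + θ i * b j) * x j)) - (if i = j then θ i * x j else 0)) :=
          Finset.sum_congr rfl fun j _ => by split_ifs <;> ring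
      _ = (∑ j, v * (θ i * ((A i j + θ i * b j) * x j)))
            - ∑ j, (if i = j then θ i * x j else 0) := Finset.sum_sub_distrib _ _
      _ = v * (θ i * ∑ j, (A i j + θ i * b j) * x j) - θ i * x i := by
          rw [Finset.sum_ite_eq Finset.univ i (fun j => θ i * x j)]
          simp [Finset.mul_sum]
  conv_rhs =>
    rw [show (∑ j, (∑ i, ((v * A i j - (if i = j then 1 else 0)) * θ i + v * b j * θ i ^ 2)) * x j)
        = ∑ j, ∑ i, ((v * A i j - (if i = j then 1 else 0)) * θ i + v * b j * θ i ^ 2) * x j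
      from Finset.sum_congr rfl fun j _ => Finset.sum_mul _ _ _]
    rw [Finset.sum_comm]
  exact Finset.sum_congr rfl fun i _ => ((hrhs i).symm)

lemma key {d : ℕ} (A : Matrix (Fin d) (Fin d) ℝ) (b : Fin d → ℝ) (v : ℝ) (x θ : Fin d → ℝ) :
    (v * dot θ ((A + vecMulVec θ b).mulVec x) - dot θ x) ^ 2
      = ∑ j, ∑ l, (x j * x l) * (cf A b v j θ * cf A b v l θ) := by
  rw [base A b v x θ, sq, Finset.sum_mul_sum]
  exact Finset.sum_congr rfl fun j _ => Finset.sum_congr rfl fun l _ => by ring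

lemma cf_mul_expand {d : ℕ} (A : Matrix (Fin d) (Fin d) ℝ) (b : Fin d → ℝ) (v : ℝ)
    (j l : Fin d) (θ : Fin d → ℝ) :
    cf A b v j θ * cf A b v l θ = ∑ i, ∑ k,
      (Cm A v i j * Cm A v k l * (θ i ^ 1 * θ k ^ 1)
        + Cm A v i j * (v * b l) * (θ i ^ 1 * θ k ^ 2)
        + (v * b j) * Cm A v k l * (θ i ^ 2 * θ k ^ 1)
        + (v * b j) * (v * b l) * (θ i ^ 2 * θ k ^ 2)) := by
  rw [cf, cf, Finset.sum_mul_sum]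
  exact Finset.sum_congr rfl fun i _ => Finset.sum_congr rfl fun k _ => by ring

section theta

variable {d : ℕ}

lemma theta_pi : thetaG d = Measure.pi (fun _ : Fin d => gaussianReal 0 (d : ℝ≥0)⁻¹) := rfl

lemma hvθ' (hd : d ≠ 0) : ((d : ℝ≥0))⁻¹ ≠ 0 := inv_ne_zero (Nat.cast_ne_zero.mpr hd)

lemma hcast : (((d : ℝ≥0))⁻¹ : ℝ) = (d : ℝ)⁻¹ := by
  simp

lemma mono_integrable (hd : d ≠ 0) (a c : ℕ) (i k : Fin d) :
    Integrable (fun θ : Fin d → ℝ => θ i ^ a * θ k ^ c) (thetaG d) := by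
  rw [theta_pi]
  exact integrable_pi_two _ i k (fun t => t ^ a) (fun t => t ^ c)
    (gaussian_integrable_pow (hvθ' hd) a) (gaussian_integrable_pow (hvθ' hd) c)
    (((gaussian_integrable_pow (hvθ' hd) (a + c))).congr
      (Filter.Eventually.of_forall fun t => by simp [pow_add]))

lemma mono_integral (hd : d ≠ 0) (a c : ℕ) (i k : Fin d) :
    ∫ θ : Fin d → ℝ, θ i ^ a * θ k ^ c ∂thetaG d
      = if i = k then ∫ t : ℝ, t ^ (a + c) ∂gaussianReal 0 (d : ℝ≥0)⁻¹
        else (∫ t : ℝ, t ^ a ∂gaussianReal 0 (d : ℝ≥0)⁻¹)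
          * ∫ t : ℝ, t ^ c ∂gaussianReal 0 (d : ℝ≥0)⁻¹ := by
  rw [theta_pi]
  rw [integral_pi_two _ i k (fun t => t ^ a) (fun t => t ^ c)
    (gaussian_integrable_pow (hvθ' hd) a) (gaussian_integrable_pow (hvθ' hd) c)
    (((gaussian_integrable_pow (hvθ' hd) (a + c))).congr
      (Filter.Eventually.of_forall fun t => by simp [pow_add]))]
  rcases eq_or_ne i k with rfl | hik
  · simp only [if_pos rfl]
    refine integral_congr_ae (Filter.Eventually.of_forall fun t => ?_)
    simp [pow_add]
  · simp [hik]

lemma term_integrable (hd : d ≠ 0) (A : Matrix (Fin d) (Fin d) ℝ) (b : Fin d → ℝ) (v : ℝ)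
    (i k j l : Fin d) :
    Integrable (fun θ : Fin d → ℝ =>
      Cm A v i j * Cm A v k l * (θ i ^ 1 * θ k ^ 1)
        + Cm A v i j * (v * b l) * (θ i ^ 1 * θ k ^ 2)
        + (v * b j) * Cm A v k l * (θ i ^ 2 * θ k ^ 1)
        + (v * b j) * (v * b l) * (θ i ^ 2 * θ k ^ 2)) (thetaG d) :=
  ((((mono_integrable hd 1 1 i k).const_mul _).add
    ((mono_integrable hd 1 2 i k).const_mul _)).add
    ((mono_integrable hd 2 1 i k).const_mul _)).add
    ((mono_integrable hd 2 2 i k).const_mul _)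

lemma gm1 : ∫ t : ℝ, t ^ 1 ∂gaussianReal 0 (d : ℝ≥0)⁻¹ = 0 :=
  gaussian_moment_odd _ 1 odd_one

lemma gm2 (hd : d ≠ 0) : ∫ t : ℝ, t ^ 2 ∂gaussianReal 0 (d : ℝ≥0)⁻¹ = (d : ℝ)⁻¹ := by
  rw [gaussian_moment_two (hvθ' hd)]
  simp

lemma gm3 : ∫ t : ℝ, t ^ 3 ∂gaussianReal 0 (d : ℝ≥0)⁻¹ = 0 :=
  gaussian_moment_odd _ 3 ⟨1, by norm_num⟩

lemma gm4 (hd : d ≠ 0) : ∫ t : ℝ, t ^ 4 ∂gaussianReal 0 (d : ℝ≥0)⁻¹ = 3 * ((d : ℝ)⁻¹) ^ 2 := by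
  rw [gaussian_moment_four (hvθ' hd)]
  simp

lemma term_integral (hd : d ≠ 0) (A : Matrix (Fin d) (Fin d) ℝ) (b : Fin d → ℝ) (v : ℝ)
    (i k j l : Fin d) :
    ∫ θ : Fin d → ℝ,
      (Cm A v i j * Cm A v k l * (θ i ^ 1 * θ k ^ 1)
        + Cm A v i j * (v * b l) * (θ i ^ 1 * θ k ^ 2)
        + (v * b j) * Cm A v k l * (θ i ^ 2 * θ k ^ 1)
        + (v * b j) * (v * b l) * (θ i ^ 2 * θ k ^ 2)) ∂thetaG d
      = if i = k then Cm A v i j * Cm A v k l * (d : ℝ)⁻¹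
          + (v * b j) * (v * b l) * (3 * ((d : ℝ)⁻¹) ^ 2)
        else (v * b j) * (v * b l) * (((d : ℝ)⁻¹) ^ 2) := by
  have i11 : Integrable (fun θ : Fin d → ℝ =>
      Cm A v i j * Cm A v k l * (θ i ^ 1 * θ k ^ 1)) (thetaG d) :=
    (mono_integrable hd 1 1 i k).const_mul _
  have i12 : Integrable (fun θ : Fin d → ℝ =>
      Cm A v i j * (v * b l) * (θ i ^ 1 * θ k ^ 2)) (thetaG d) :=
    (mono_integrable hd 1 2 i k).const_mul _
  have i21 : Integrable (fun θ : Fin d → ℝ =>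
      (v * b j) * Cm A v k l * (θ i ^ 2 * θ k ^ 1)) (thetaG d) :=
    (mono_integrable hd 2 1 i k).const_mul _
  have i22 : Integrable (fun θ : Fin d → ℝ =>
      (v * b j) * (v * b l) * (θ i ^ 2 * θ k ^ 2)) (thetaG d) :=
    (mono_integrable hd 2 2 i k).const_mul _
  have i112 : Integrable (fun θ : Fin d → ℝ =>
      Cm A v i j * Cm A v k l * (θ i ^ 1 * θ k ^ 1)
        + Cm A v i j * (v * b l) * (θ i ^ 1 * θ k ^ 2)) (thetaG d) := i11.add i12
  have i1123 : Integrable (fun θ : Fin d → ℝ =>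
      Cm A v i j * Cm A v k l * (θ i ^ 1 * θ k ^ 1)
        + Cm A v i j * (v * b l) * (θ i ^ 1 * θ k ^ 2)
        + (v * b j) * Cm A v k l * (θ i ^ 2 * θ k ^ 1)) (thetaG d) := i112.add i21
  rw [integral_add i1123 i22, integral_add i112 i21, integral_add i11 i12]
  rw [MeasureTheory.integral_const_mul, MeasureTheory.integral_const_mul,
    MeasureTheory.integral_const_mul, MeasureTheory.integral_const_mul]
  rw [mono_integral hd 1 1 i k, mono_integral hd 1 2 i k, mono_integral hd 2 1 i k,
    mono_integral hd 2 2 i k]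
  rcases eq_or_ne i k with rfl | hik
  · simp only [if_pos rfl]
    norm_num [gm2 hd, gm3, gm4 hd]
    all_goals ring
  · simp only [if_neg hik]
    rw [gm1, gm2 hd]
    all_goals ring

lemma cf_integrable (hd : d ≠ 0) (A : Matrix (Fin d) (Fin d) ℝ) (b : Fin d → ℝ) (v : ℝ) (j l : Fin d) :
    Integrable (fun θ : Fin d → ℝ => cf A b v j θ * cf A b v l θ) (thetaG d) := by
  simp_rw [cf_mul_expand]
  exact integrable_finset_sum _ fun i _ => integrable_finset_sum _ fun k _ =>
    term_integrable hd A b v i k j l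

lemma cf_integral (hd : d ≠ 0) (A : Matrix (Fin d) (Fin d) ℝ) (b : Fin d → ℝ) (v : ℝ) (j l : Fin d) :
    ∫ θ : Fin d → ℝ, cf A b v j θ * cf A b v l θ ∂thetaG d
      = (∑ i, Cm A v i j * Cm A v i l) * (d : ℝ)⁻¹
        + v ^ 2 * b j * b l * (((d : ℝ) + 2) * (d : ℝ)⁻¹) := by
  have hd0 : ((d : ℝ)) ≠ 0 := Nat.cast_ne_zero.mpr hd
  simp_rw [cf_mul_expand]
  rw [integral_finset_sum _ (fun i _ => integrable_finset_sum _ (fun k _ =>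
    term_integrable hd A b v i k j l))]
  calc
    ∑ i, ∫ θ : Fin d → ℝ, (∑ k,
        (Cm A v i j * Cm A v k l * (θ i ^ 1 * θ k ^ 1)
          + Cm A v i j * (v * b l) * (θ i ^ 1 * θ k ^ 2)
          + (v * b j) * Cm A v k l * (θ i ^ 2 * θ k ^ 1)
          + (v * b j) * (v * b l) * (θ i ^ 2 * θ k ^ 2))) ∂thetaG d
      = ∑ i, ∑ k, (if i = k then Cm A v i j * Cm A v k l * (d : ℝ)⁻¹
          + (v * b j) * (v * b l) * (3 * ((d : ℝ)⁻¹) ^ 2)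
        else (v * b j) * (v * b l) * (((d : ℝ)⁻¹) ^ 2)) := by
        refine Finset.sum_congr rfl fun i _ => ?_
        rw [integral_finset_sum _ (fun k _ => term_integrable hd A b v i k j l)]
        exact Finset.sum_congr rfl fun k _ => term_integral hd A b v i k j l
    _ = ∑ i, (Cm A v i j * Cm A v i l * (d : ℝ)⁻¹
          + (v * b j) * (v * b l) * (3 * ((d : ℝ)⁻¹) ^ 2)
          + ((d : ℝ) - 1) * ((v * b j) * (v * b l) * (((d : ℝ)⁻¹) ^ 2))) := by
        refine Finset.sum_congr rfl fun i _ => ?_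
        rw [Finset.sum_congr rfl (fun k (_ : k ∈ Finset.univ) =>
          (show (if i = k then Cm A v i j * Cm A v k l * (d : ℝ)⁻¹
              + (v * b j) * (v * b l) * (3 * ((d : ℝ)⁻¹) ^ 2)
            else (v * b j) * (v * b l) * (((d : ℝ)⁻¹) ^ 2))
            = (v * b j) * (v * b l) * (((d : ℝ)⁻¹) ^ 2)
              + (if i = k then Cm A v i j * Cm A v k l * (d : ℝ)⁻¹
                + (v * b j) * (v * b l) * (3 * ((d : ℝ)⁻¹) ^ 2)
                - (v * b j) * (v * b l) * (((d : ℝ)⁻¹) ^ 2) else 0)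
            from by split_ifs <;> ring))]
        rw [Finset.sum_add_distrib, Finset.sum_const, Finset.sum_ite_eq Finset.univ i]
        simp only [Finset.mem_univ, if_pos, Finset.card_univ, Fintype.card_fin, nsmul_eq_mul]
        ring
    _ = (∑ i, Cm A v i j * Cm A v i l) * (d : ℝ)⁻¹
        + v ^ 2 * b j * b l * (((d : ℝ) + 2) * (d : ℝ)⁻¹) := by
        rw [Finset.sum_add_distrib, Finset.sum_add_distrib, Finset.sum_const,
          Finset.card_univ, Fintype.card_fin, ← Finset.sum_mul]
        simp only [Finset.sum_const, Finset.card_univ, Fintype.card_fin, nsmul_eq_mul]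
        field_simp
        ring

end theta

lemma xmom (d : ℕ) (j l : Fin d) :
    ∫ x : Fin d → ℝ, x j * x l ∂stdG d = if j = l then 1 else 0 := by
  have Ix : ∀ n : ℕ, Integrable (fun t : ℝ => t ^ n) (gaussianReal 0 1) :=
    gaussian_integrable_pow one_ne_zero
  have h := integral_pi_two (gaussianReal 0 1) j l (fun t => t ^ 1) (fun t => t ^ 1)
    (Ix 1) (Ix 1) ((Ix 2).congr (Filter.Eventually.of_forall fun t => by ring))
  simp_rw [pow_one] at h
  rw [show stdG d = Measure.pi (fun _ : Fin d => gaussianReal 0 1) from rfl, h]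
  have h2 : ∫ t : ℝ, t * t ∂gaussianReal 0 1 = 1 := by
    simp_rw [← sq]
    rw [gaussian_moment_two one_ne_zero]
    norm_num
  have h1 : ∫ t : ℝ, t ∂gaussianReal 0 1 = 0 := by
    have := gaussian_moment_odd 1 1 odd_one
    simpa using this
  rw [h1, h2]
  simp

lemma xmom_integrable (d : ℕ) (j l : Fin d) :
    Integrable (fun x : Fin d → ℝ => x j * x l) (stdG d) := by
  have Ix : ∀ n : ℕ, Integrable (fun t : ℝ => t ^ n) (gaussianReal 0 1) :=
    gaussian_integrable_pow one_ne_zero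
  have h := integrable_pi_two (gaussianReal 0 1) j l (fun t => t ^ 1) (fun t => t ^ 1)
    (Ix 1) (Ix 1) ((Ix 2).congr (Filter.Eventually.of_forall fun t => by ring))
  simpa [stdG] using h

end ICLaux

open ICLaux in
/-- The leading (D-independent) term of the single-head ICL loss equals
`(1/d)·tr((vA−I)(vA−I)ᵀ) + v²‖b‖²(d+2)/d`, and it vanishes exactly when `vA = I` and `b = 0`. -/
theorem single_head_leading_term (d : ℕ) (hd : 1 ≤ d)
    (A : Matrix (Fin d) (Fin d) ℝ) (b : Fin d → ℝ) (v : ℝ) :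
    (∫ p : (Fin d → ℝ) × (Fin d → ℝ),
        (v * dot p.2 ((A + vecMulVec p.2 b).mulVec p.1) - dot p.2 p.1) ^ 2
        ∂((stdG d).prod (thetaG d)))
      = (1 / (d : ℝ)) * ((v • A - 1) * (v • A - 1)ᵀ).trace
        + v ^ 2 * (∑ j, b j ^ 2) * (((d : ℝ) + 2) / d) ∧
    ((1 / (d : ℝ)) * ((v • A - 1) * (v • A - 1)ᵀ).trace
        + v ^ 2 * (∑ j, b j ^ 2) * (((d : ℝ) + 2) / d) = 0 ↔ v • A = 1 ∧ b = 0) := by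
  have hdn : d ≠ 0 := Nat.one_le_iff_ne_zero.mp hd
  have hd0 : ((d : ℝ)) ≠ 0 := Nat.cast_ne_zero.mpr hdn
  have htr : ((v • A - 1) * (v • A - 1)ᵀ).trace = ∑ i, ∑ j, Cm A v i j * Cm A v i j := by
    simp only [Matrix.trace, Matrix.mul_apply, Matrix.diag, Cm, Matrix.sub_apply,
      Matrix.smul_apply, Matrix.one_apply, smul_eq_mul, Matrix.transpose_apply]
  haveI : IsProbabilityMeasure (stdG d) := by
    rw [show stdG d = Measure.pi (fun _ : Fin d => gaussianReal 0 1) from rfl]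
    infer_instance
  haveI : IsProbabilityMeasure (thetaG d) := by
    rw [theta_pi]
    infer_instance
  constructor
  · calc
      ∫ p : (Fin d → ℝ) × (Fin d → ℝ),
          (v * dot p.2 ((A + vecMulVec p.2 b).mulVec p.1) - dot p.2 p.1) ^ 2
          ∂((stdG d).prod (thetaG d))
        = ∫ p : (Fin d → ℝ) × (Fin d → ℝ),
            (∑ j, ∑ l, (p.1 j * p.1 l) * (cf A b v j p.2 * cf A b v l p.2))
            ∂((stdG d).prod (thetaG d)) :=
          integral_congr_ae (Filter.Eventually.of_forall fun p => key A b v p.1 p.2)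
      _ = ∑ j, ∑ l, ∫ p : (Fin d → ℝ) × (Fin d → ℝ),
            (p.1 j * p.1 l) * (cf A b v j p.2 * cf A b v l p.2)
            ∂((stdG d).prod (thetaG d)) := by
          rw [integral_finset_sum _ (fun j _ => integrable_finset_sum _ (fun l _ =>
            (xmom_integrable d j l).mul_prod (cf_integrable hdn A b v j l)))]
          exact Finset.sum_congr rfl fun j _ => integral_finset_sum _ fun l _ =>
            (xmom_integrable d j l).mul_prod (cf_integrable hdn A b v j l)
      _ = ∑ j, ∑ l, (∫ x : Fin d → ℝ, x j * x l ∂stdG d)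
            * ∫ θ : Fin d → ℝ, cf A b v j θ * cf A b v l θ ∂thetaG d :=
          Finset.sum_congr rfl fun j _ => Finset.sum_congr rfl fun l _ =>
            integral_prod_mul (fun x : Fin d → ℝ => x j * x l)
              (fun θ : Fin d → ℝ => cf A b v j θ * cf A b v l θ)
      _ = ∑ j, ∫ θ : Fin d → ℝ, cf A b v j θ * cf A b v j θ ∂thetaG d := by
          refine Finset.sum_congr rfl fun j _ => ?_
          simp_rw [xmom d, ite_mul, one_mul, zero_mul]
          rw [Finset.sum_ite_eq]
          simp
      _ = ∑ j, ((∑ i, Cm A v i j * Cm A v i j) * (d : ℝ)⁻¹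
          + v ^ 2 * b j * b j * (((d : ℝ) + 2) * (d : ℝ)⁻¹)) :=
          Finset.sum_congr rfl fun j _ => cf_integral hdn A b v j j
      _ = (1 / (d : ℝ)) * ((v • A - 1) * (v • A - 1)ᵀ).trace
          + v ^ 2 * (∑ j, b j ^ 2) * (((d : ℝ) + 2) / d) := by
          have e1 : ∑ j, (∑ i, Cm A v i j * Cm A v i j) * (d : ℝ)⁻¹
              = (1 / (d : ℝ)) * ((v • A - 1) * (v • A - 1)ᵀ).trace := by
            rw [htr, ← Finset.sum_mul, Finset.sum_comm, one_div, mul_comm]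
          have e2 : ∑ j, v ^ 2 * b j * b j * (((d : ℝ) + 2) * (d : ℝ)⁻¹)
              = v ^ 2 * (∑ j, b j ^ 2) * (((d : ℝ) + 2) / d) := by
            rw [Finset.sum_congr rfl (fun j (_ : j ∈ Finset.univ) =>
              (show v ^ 2 * b j * b j * (((d : ℝ) + 2) * (d : ℝ)⁻¹)
                = (v ^ 2 * (((d : ℝ) + 2) / d)) * b j ^ 2 from by ring)),
              ← Finset.mul_sum]
            ring
          rw [Finset.sum_add_distrib, e1, e2]
    rfl
  · rw [htr]
    have hTnn : 0 ≤ ∑ i, ∑ j, Cm A v i j * Cm A v i j :=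
      Finset.sum_nonneg fun i _ => Finset.sum_nonneg fun j _ => mul_self_nonneg _
    have hSnn : 0 ≤ ∑ j, b j ^ 2 := Finset.sum_nonneg fun j _ => sq_nonneg _
    have hc1 : 0 < 1 / (d : ℝ) := by positivity
    have hdRpos : (0 : ℝ) < d := by positivity
    have hc2 : 0 < ((d : ℝ) + 2) / d := by positivity
    constructor
    · intro h
      have ht1 : 0 ≤ v ^ 2 * (∑ j, b j ^ 2) * (((d : ℝ) + 2) / d) :=
        mul_nonneg (mul_nonneg (sq_nonneg v) hSnn) hc2.le
      have ht2 : 0 ≤ (1 / (d : ℝ)) * ∑ i, ∑ j, Cm A v i j * Cm A v i j :=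
        mul_nonneg hc1.le hTnn
      have hT0 : ∑ i, ∑ j, Cm A v i j * Cm A v i j = 0 := by
        have hz : (1 / (d : ℝ)) * (∑ i, ∑ j, Cm A v i j * Cm A v i j) = 0 :=
          le_antisymm (by linarith) ht2
        rcases mul_eq_zero.mp hz with h' | h'
        · exact absurd h' hc1.ne'
        · exact h'
      have hCij : ∀ i j, Cm A v i j = 0 := by
        intro i j
        have h1 := (Finset.sum_eq_zero_iff_of_nonneg
          (fun i _ => Finset.sum_nonneg fun j _ => mul_self_nonneg (Cm A v i j))).mp hT0 i
          (Finset.mem_univ i)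
        have h2 := (Finset.sum_eq_zero_iff_of_nonneg
          (fun j _ => mul_self_nonneg (Cm A v i j))).mp h1 j (Finset.mem_univ j)
        exact mul_self_eq_zero.mp h2
      have hvA : v • A = 1 := by
        ext i j
        have hC := hCij i j
        simp only [Cm] at hC
        simp only [Matrix.smul_apply, Matrix.one_apply, smul_eq_mul]
        rcases eq_or_ne i j with rfl | hij
        · simp only [if_pos rfl] at hC ⊢
          linarith
        · simp only [if_neg hij] at hC ⊢
          linarith
      have hvne : v ≠ 0 := by
        intro hv0
        rw [hv0, zero_smul] at hvA
        have i0 : Fin d := ⟨0, hd⟩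
        have := congrFun (congrFun hvA i0) i0
        simp [Matrix.one_apply] at this
      have hb0 : b = 0 := by
        have hX : v ^ 2 * (∑ j, b j ^ 2) * (((d : ℝ) + 2) / d) = 0 := by
          rw [hT0] at h
          linarith
        have hS0 : ∑ j, b j ^ 2 = 0 := by
          by_contra hne
          have hpos : 0 < ∑ j, b j ^ 2 := lt_of_le_of_ne hSnn (Ne.symm hne)
          have hv2 : 0 < v ^ 2 := by
            rcases hvne.lt_or_gt with h' | h' <;> nlinarith
          have : 0 < v ^ 2 * (∑ j, b j ^ 2) * (((d : ℝ) + 2) / d) :=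
            mul_pos (mul_pos hv2 hpos) hc2
          linarith
        funext j
        have hj := (Finset.sum_eq_zero_iff_of_nonneg
          (fun j _ => sq_nonneg (b j))).mp hS0 j (Finset.mem_univ j)
        have : b j = 0 := by
          have := sq_eq_zero_iff.mp hj
          exact this
        simpa using this
      exact ⟨hvA, hb0⟩
    · rintro ⟨hvA, hb0⟩
      have hC : ∀ i j, Cm A v i j = 0 := by
        intro i j
        have hthis := congrFun (congrFun hvA i) j
        simp only [Matrix.smul_apply, Matrix.one_apply, smul_eq_mul] at hthis
        simp only [Cm]
        rw [hthis]
        ring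
      subst hb0
      simp [hC]

end
end

section
/- Fix d ≥ 1 and v ∈ ℝ with v² > 2, and let g be the limiting two-head loss function. Then there exists c ∈ (0, 1) with v² > max{2c², 2(2c−1)²} such that g(c) < g(1) = v²·(v²/(v²−2))^{d/2} + (v²/(v²−2))^{d/2+1}; that is, the limiting two-head loss can be made strictly smaller than the limiting single-head loss, so c = 1 (which reduces the two-head attention to single-head attention) is not the optimal choice. -/
noncomputable section

/-- The limiting (after multiplying by `D`) two-head in-context-learning loss `g(c)`, for
`v² > max{2c², 2(2c−1)²}`. -/
def twoHeadLimit (d : ℕ) (v c : ℝ) : ℝ :=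
  4 * v ^ 2 * ((v ^ 2 / (v ^ 2 - 2 * c ^ 2)) ^ ((d : ℝ) / 2)
      - (v ^ 2 / (v ^ 2 - 2 * c * (2 * c - 1))) ^ ((d : ℝ) / 2))
    + v ^ 2 * (v ^ 2 / (v ^ 2 - 2 * (2 * c - 1) ^ 2)) ^ ((d : ℝ) / 2)
    + (2 * c - 1) ^ 2 * (v ^ 2 / (v ^ 2 - 2 * (2 * c - 1) ^ 2)) ^ ((d : ℝ) / 2 + 1)
    + 4 * c ^ 2 * (v ^ 2 / (v ^ 2 - 2 * c ^ 2)) ^ ((d : ℝ) / 2 + 1)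
    - 4 * c * (2 * c - 1) * (v ^ 2 / (v ^ 2 - 2 * c * (2 * c - 1))) ^ ((d : ℝ) / 2 + 1)

/-- Key convexity-type inequality: for `0 < a ≤ 1` and `0 < s`,
`4 * ((3+a)/4) ^ (-s) ≤ 3 + a ^ (-s)`. -/
lemma key_ineq (a s : ℝ) (ha : 0 < a) (ha1 : a ≤ 1) (hs : 0 < s) :
    4 * (((3 + a) / 4 : ℝ) ^ (-s)) ≤ 3 + a ^ (-s) := by
  set z : ℝ := a ^ ((1:ℝ)/4) with hz_def
  have hz : 0 < z := Real.rpow_pos_of_pos ha _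
  have hz4 : z ^ (4:ℕ) = a := by
    rw [hz_def, ← Real.rpow_natCast (a ^ ((1:ℝ)/4)) 4, ← Real.rpow_mul ha.le]
    norm_num
  have hzb : z ≤ (3 + a) / 4 := by
    nlinarith [sq_nonneg (z - 1), sq_nonneg (z + 1), sq_nonneg z,
      mul_nonneg (sq_nonneg (z-1)) (sq_nonneg (z+1)), mul_nonneg (sq_nonneg (z-1)) (sq_nonneg z)]
  have h1 : (((3 + a) / 4 : ℝ)) ^ (-s) ≤ z ^ (-s) :=
    Real.rpow_le_rpow_of_nonpos hz hzb (neg_nonpos.mpr hs.le)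
  set y : ℝ := z ^ (-s) with hy_def
  have hy1 : 1 ≤ y := by
    have hz1 : z ≤ 1 := by
      calc z ≤ (3 + a) / 4 := hzb
        _ ≤ 1 := by linarith
    exact Real.one_le_rpow_of_pos_of_le_one_of_nonpos hz hz1 (neg_nonpos.mpr hs.le)
  have hy4 : y ^ (4:ℕ) = a ^ (-s) := by
    rw [hy_def, hz_def, ← Real.rpow_natCast _ 4, ← Real.rpow_mul (Real.rpow_pos_of_pos ha _).le,
      ← Real.rpow_mul ha.le]
    ring_nf
  have hpoly : 4 * y ≤ 3 + y ^ (4:ℕ) := by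
    nlinarith [mul_nonneg (sq_nonneg (y - 1)) (sq_nonneg (y + 1)), sq_nonneg (y-1)]
  calc 4 * (((3 + a) / 4 : ℝ) ^ (-s)) ≤ 4 * y := by linarith
    _ ≤ 3 + y ^ (4:ℕ) := hpoly
    _ = 3 + a ^ (-s) := by rw [hy4]

/-- There is some `c ∈ (0,1)` (with `v² > max{2c², 2(2c−1)²}`) at which the limiting two-head
loss is strictly smaller than its value at `c = 1`, which equals the limiting single-head loss:
multi-head attention strictly beats single-head attention. -/
theorem twoHeadLimit_beats_single_head (d : ℕ) (hd : 1 ≤ d) (v : ℝ) (hv : 2 < v ^ 2) :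
    ∃ c : ℝ, 0 < c ∧ c < 1 ∧
      max (2 * c ^ 2) (2 * (2 * c - 1) ^ 2) < v ^ 2 ∧
      twoHeadLimit d v c < twoHeadLimit d v 1 ∧
      twoHeadLimit d v 1
        = v ^ 2 * (v ^ 2 / (v ^ 2 - 2)) ^ ((d : ℝ) / 2)
          + (v ^ 2 / (v ^ 2 - 2)) ^ ((d : ℝ) / 2 + 1) := by
  have hw : (0:ℝ) < v ^ 2 := by linarith
  set s : ℝ := (d : ℝ) / 2 with hs_def
  have hs : 0 < s := by
    have : (1:ℝ) ≤ (d:ℝ) := by exact_mod_cast hd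
    rw [hs_def]; linarith
  -- value at c = 1
  have hone : twoHeadLimit d v 1
      = v ^ 2 * (v ^ 2 / (v ^ 2 - 2)) ^ s + (v ^ 2 / (v ^ 2 - 2)) ^ (s + 1) := by
    unfold twoHeadLimit
    norm_num
    rw [hs_def]
  refine ⟨1/2, by norm_num, by norm_num, ?_, ?_, hone⟩
  · have : max (2 * ((1:ℝ)/2) ^ 2) (2 * (2 * (1/2) - 1) ^ 2) = 1/2 := by norm_num
    rw [this]; linarith
  -- value at c = 1/2
  set A : ℝ := v ^ 2 / (v ^ 2 - 2) with hA_def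
  set B : ℝ := v ^ 2 / (v ^ 2 - 1/2) with hB_def
  have hhalf : twoHeadLimit d v (1/2)
      = 4 * v ^ 2 * (B ^ s - 1) + v ^ 2 + B ^ (s + 1) := by
    unfold twoHeadLimit
    rw [hB_def]
    norm_num
    rw [div_self (ne_of_gt hw), Real.one_rpow]
    ring
  rw [hhalf, hone]
  -- the two key inequalities
  set a : ℝ := (v ^ 2 - 2) / v ^ 2 with ha_def
  have ha : 0 < a := div_pos (by linarith) hw
  have ha1 : a ≤ 1 := by
    rw [ha_def, div_le_one hw]; linarith
  have hAinv : A ^ s = a ^ (-s) := by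
    have h : A = a⁻¹ := by rw [hA_def, ha_def, inv_div]
    rw [h, Real.inv_rpow ha.le, ← Real.rpow_neg ha.le]
  have hBinv : B ^ s = (((3 + a) / 4 : ℝ)) ^ (-s) := by
    have hbpos : (0:ℝ) ≤ (3 + a) / 4 := by linarith
    have hb : (3 + a) / 4 = (v ^ 2 - 1/2) / v ^ 2 := by
      have hv0 : v ≠ 0 := by rintro rfl; norm_num at hw
      rw [ha_def]; field_simp; ring
    have h : B = ((3 + a) / 4)⁻¹ := by rw [hb, hB_def, inv_div]
    rw [h, Real.inv_rpow hbpos, ← Real.rpow_neg hbpos]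
  have hkey : 4 * B ^ s ≤ 3 + A ^ s := by
    rw [hBinv, hAinv]; exact key_ineq a s ha ha1 hs
  have hBA : B < A := by
    rw [hB_def, hA_def]
    exact div_lt_div_of_pos_left hw (by linarith) (by linarith)
  have hB1 : (1:ℝ) ≤ B := by
    rw [hB_def, le_div_iff₀ (by linarith)]; linarith
  have hpow : B ^ (s + 1) < A ^ (s + 1) :=
    Real.rpow_lt_rpow (by linarith) hBA (by linarith)
  nlinarith [hkey, hpow, hw]

end
end
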